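/- arXiv:1909.03173 — 2 statements merged into one kernel-verified Lean document; each statement's English description precedes it below -/
import Mathlib

section
/- Let g : ℝ → ℝ be differentiable with |g'(y)| < 4/π² for all y in the interval I_k = [2kπ - π/2, 2kπ + π/2], and let ξ ∈ [2kπ - π/2, 2kπ]. Then for every x ∈ [2kπ, 2kπ + π/2], the integral ∫_ξ^x [cos(y) - g'(y)] dy is nonnegative. -/
open MeasureTheory Real Set Metric Filter

/-- If `|g'| < 4/π²` on `I_k = [2kπ - π/2, 2kπ + π/2]`, `ξ ∈ [2kπ - π/2, 2kπ]` and
`x ∈ [2kπ, 2kπ + π/2]`, then `∫_ξ^x (cos y - g' y) dy ≥ 0`. -/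
theorem integral_cos_sub_deriv_nonneg (k : ℕ) (hk : 0 < k) (g : ℝ → ℝ)
    (hg : ContDiff ℝ 1 g)
    (hg' : ∀ y ∈ Set.Icc (2 * k * π - π / 2) (2 * k * π + π / 2),
      |deriv g y| < 4 / π ^ 2)
    (ξ : ℝ) (hξ : ξ ∈ Set.Icc (2 * k * π - π / 2) (2 * k * π))
    (x : ℝ) (hx : x ∈ Set.Icc (2 * k * π) (2 * k * π + π / 2)) :
    0 ≤ ∫ y in ξ..x, (Real.cos y - deriv g y) := by
  obtain ⟨hξ1, hξ2⟩ := hξ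
  obtain ⟨hx1, hx2⟩ := hx
  have hξx : ξ ≤ x := le_trans hξ2 hx1
  have hdg : Differentiable ℝ g := hg.differentiable one_ne_zero
  have hcont : Continuous (deriv g) := (hg.iterate_deriv' 0 1).continuous
  -- split integral
  have hint : (∫ y in ξ..x, (Real.cos y - deriv g y))
      = (Real.sin x - Real.sin ξ) - (g x - g ξ) := by
    rw [intervalIntegral.integral_sub (Continuous.intervalIntegrable Real.continuous_cos _ _)
      (hcont.intervalIntegrable _ _), integral_cos,
      intervalIntegral.integral_deriv_eq_sub (fun y _ => hdg y)
        (hcont.intervalIntegrable _ _)]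
  rw [hint]
  have hpi : (0:ℝ) < π := Real.pi_pos
  -- bound on g x - g ξ
  have hsub : Set.Icc ξ x ⊆ Set.Icc (2 * k * π - π / 2) (2 * k * π + π / 2) :=
    Set.Icc_subset_Icc hξ1 hx2
  have hgb : |g x - g ξ| ≤ 4 / π ^ 2 * (x - ξ) := by
    have := Convex.norm_image_sub_le_of_norm_deriv_le
      (f := g) (s := Set.Icc ξ x) (C := 4 / π ^ 2)
      (fun y _ => hdg y)
      (fun y hy => (hg' y (hsub hy)).le) (convex_Icc _ _)
      (Set.left_mem_Icc.2 hξx) (Set.right_mem_Icc.2 hξx)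
    simpa [Real.norm_eq_abs, abs_of_nonneg (sub_nonneg.2 hξx)] using this
  -- bound on sin x - sin ξ
  have hsin : Real.sin x - Real.sin ξ ≥ Real.sqrt 2 / π * (x - ξ) := by
    rw [Real.sin_sub_sin]
    have h1 : Real.sin ((x - ξ) / 2) ≥ (x - ξ) / π := by
      have := Real.mul_le_sin (x := (x - ξ) / 2) (by linarith) (by linarith)
      calc (x - ξ) / π = 2 / π * ((x - ξ) / 2) := by field_simp
        _ ≤ Real.sin ((x - ξ) / 2) := this
    have h2 : Real.cos ((x + ξ) / 2) ≥ Real.sqrt 2 / 2 := by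
      have hper : Real.cos ((x + ξ) / 2) = Real.cos ((x + ξ) / 2 - k * (2 * π)) := by
        rw [← Real.cos_add_int_mul_two_pi ((x + ξ) / 2 - k * (2 * π)) k]
        push_cast; ring_nf
      rw [hper, ← Real.cos_pi_div_four, ← Real.cos_abs ((x + ξ) / 2 - k * (2 * π))]
      apply Real.cos_le_cos_of_nonneg_of_le_pi (abs_nonneg _) (by linarith)
      rw [abs_le]
      constructor <;> push_cast <;> nlinarith
    have hs2 : (0:ℝ) ≤ Real.sqrt 2 := Real.sqrt_nonneg 2
    have hxξ : 0 ≤ (x - ξ) / π := div_nonneg (by linarith) hpi.le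
    calc Real.sqrt 2 / π * (x - ξ) = 2 * ((x - ξ) / π) * (Real.sqrt 2 / 2) := by ring
      _ ≤ 2 * Real.sin ((x - ξ) / 2) * Real.cos ((x + ξ) / 2) := by
          apply mul_le_mul _ h2 (by positivity) _
          · apply mul_le_mul_of_nonneg_left h1 (by norm_num)
          · have hs0 : 0 ≤ Real.sin ((x - ξ) / 2) :=
              Real.sin_nonneg_of_nonneg_of_le_pi (by linarith) (by linarith)
            positivity
  -- combine
  have habs := (abs_le.1 hgb).2
  have hkey : 4 / π ^ 2 * (x - ξ) ≤ Real.sqrt 2 / π * (x - ξ) := by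
    apply mul_le_mul_of_nonneg_right _ (by linarith)
    rw [div_le_div_iff₀ (by positivity) hpi]
    have hs : Real.sqrt 2 ^ 2 = 2 := Real.sq_sqrt (by norm_num)
    have hs1 : Real.sqrt 2 ≥ 1.4 := by nlinarith [Real.sqrt_nonneg 2]
    nlinarith [Real.pi_gt_three]
  linarith
end

section
/- Let K satisfy the size estimate |K(x,y,z)| ≤ C₀(|x-y|+|x-z|)^{-2n} and let b ∈ C¹(ℝⁿ) with ‖∇b‖_∞ < ∞. Then for every η > 0, every locally integrable f, g, and every x ∈ ℝⁿ, the truncation error satisfies ∫_{|x-y|+|x-z| ≤ η} |b(x)-b(y)| |K(x,y,z)| |f(y)g(z)| dy dz ≤ C η ‖∇b‖_∞ ℳ(f,g)(x), where ℳ(f,g)(x) := sup_{Q∋x} (⨍_Q |f|)(⨍_Q |g|) is the bilinear Hardy–Littlewood maximal operator and C depends only on n. -/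
open MeasureTheory Real Set Metric Filter

/-- The bilinear Hardy–Littlewood maximal operator: supremum over all cubes
(sup-norm closed balls) containing `x` of the product of the averages of `|f|`
and `|g|`, valued in `ENNReal`. -/
noncomputable def bilinearMaximal {n : ℕ} (f g : (Fin n → ℝ) → ℝ) (x : Fin n → ℝ) :
    ENNReal :=
  ⨆ (c : Fin n → ℝ) (r : ℝ) (_ : 0 < r) (_ : x ∈ Metric.closedBall c r),
    laverage (volume.restrict (Metric.closedBall c r)) (fun y => ENNReal.ofReal |f y|) *
      laverage (volume.restrict (Metric.closedBall c r)) (fun z => ENNReal.ofReal |g z|)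

open ENNReal in
/-- Fubini-type inequality for possibly non-measurable nonnegative integrands. -/
lemma my_prod_le {α β : Type*} [MeasurableSpace α] [MeasurableSpace β]
    (μ : Measure α) (ν : Measure β) [SFinite ν] (F : α → ℝ≥0∞) (G : β → ℝ≥0∞)
    (hF : ∀ y, F y ≠ ⊤) (hG : (∫⁻ z, G z ∂ν) ≠ ⊤) :
    ∫⁻ q : α × β, F q.1 * G q.2 ∂(μ.prod ν) ≤ (∫⁻ y, F y ∂μ) * ∫⁻ z, G z ∂ν := by
  rw [lintegral_def]
  refine iSup₂_le fun φ hφ => ?_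
  calc φ.lintegral (μ.prod ν) = ∫⁻ z, φ z ∂(μ.prod ν) := (φ.lintegral_eq_lintegral _).symm
    _ = ∫⁻ y, ∫⁻ z, φ (y, z) ∂ν ∂μ := lintegral_prod _ φ.measurable.aemeasurable
    _ ≤ ∫⁻ y, F y * ∫⁻ z, G z ∂ν ∂μ := by
        refine lintegral_mono fun y => ?_
        calc ∫⁻ z, φ (y, z) ∂ν ≤ ∫⁻ z, F y * G z ∂ν := lintegral_mono fun z => hφ (y, z)
          _ = F y * ∫⁻ z, G z ∂ν := lintegral_const_mul' _ _ (hF y)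
    _ ≤ (∫⁻ y, F y ∂μ) * ∫⁻ z, G z ∂ν := le_of_eq (lintegral_mul_const' _ _ hG)

open ENNReal in
lemma my_prod_le' {α β : Type*} [MeasurableSpace α] [MeasurableSpace β]
    (μ : Measure α) (ν : Measure β) [SFinite μ] [SFinite ν] (F : α → ℝ≥0∞) (G : β → ℝ≥0∞)
    (hF : ∀ y, F y ≠ ⊤) (hG : ∀ z, G z ≠ ⊤) :
    ∫⁻ q : α × β, F q.1 * G q.2 ∂(μ.prod ν) ≤ (∫⁻ y, F y ∂μ) * ∫⁻ z, G z ∂ν := by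
  by_cases hGT : (∫⁻ z, G z ∂ν) = ⊤
  · by_cases hFT : (∫⁻ y, F y ∂μ) = ⊤
    · rw [hFT, hGT]; exact le_top
    · calc ∫⁻ q : α × β, F q.1 * G q.2 ∂(μ.prod ν)
          = ∫⁻ z : β × α, F z.swap.1 * G z.swap.2 ∂(ν.prod μ) :=
            (lintegral_prod_swap (fun q : α × β => F q.1 * G q.2)).symm
        _ = ∫⁻ z : β × α, G z.1 * F z.2 ∂(ν.prod μ) := by
            simp_rw [Prod.fst_swap, Prod.snd_swap, mul_comm]
        _ ≤ (∫⁻ z, G z ∂ν) * ∫⁻ y, F y ∂μ := my_prod_le ν μ G F hG hFT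
        _ = (∫⁻ y, F y ∂μ) * ∫⁻ z, G z ∂ν := mul_comm _ _
  · exact my_prod_le μ ν F G hF hGT

/-- Truncation-error estimate: if `|K(x,y,z)| ≤ C₀(|x-y|+|x-z|)^{-2n}` and
`b ∈ C¹` with `‖∇b‖_∞ ≤ Mb`, then for every `η > 0`
`∫_{|x-y|+|x-z| ≤ η} |b(x)-b(y)||K(x,y,z)||f(y)g(z)| dy dz
  ≤ C C₀ η Mb ℳ(f,g)(x)` with `C` depending only on `n`. -/
theorem truncation_error_le_maximal (n : ℕ) :
    ∃ C : ℝ, 0 < C ∧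
      ∀ (K : (Fin n → ℝ) → (Fin n → ℝ) → (Fin n → ℝ) → ℝ) (C₀ : ℝ),
        (∀ x y z : Fin n → ℝ, (x ≠ y ∨ x ≠ z) →
          |K x y z| ≤ C₀ / (‖x - y‖ + ‖x - z‖) ^ (2 * n)) →
      ∀ (b : (Fin n → ℝ) → ℝ) (Mb : ℝ), ContDiff ℝ 1 b →
        (∀ w, ‖fderiv ℝ b w‖ ≤ Mb) →
      ∀ η : ℝ, 0 < η → ∀ (f g : (Fin n → ℝ) → ℝ) (x : Fin n → ℝ),
        ∫⁻ q in {q : (Fin n → ℝ) × (Fin n → ℝ) | ‖x - q.1‖ + ‖x - q.2‖ ≤ η},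
            ENNReal.ofReal (|b x - b q.1| * |K x q.1 q.2| * (|f q.1| * |g q.2|))
          ≤ ENNReal.ofReal (C * C₀ * η * Mb) * bilinearMaximal f g x := by
  classical
  refine ⟨2 * 4 ^ (2 * n), by positivity, ?_⟩
  intro K C₀ hK b Mb hb hMb η hη f g x
  set h : (Fin n → ℝ) × (Fin n → ℝ) → ENNReal :=
    fun q => ENNReal.ofReal (|b x - b q.1| * |K x q.1 q.2| * (|f q.1| * |g q.2|)) with hh
  rcases Nat.eq_zero_or_pos n with hn | hn
  · -- `n = 0`: the integrand vanishes identically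
    subst hn
    have h0 : ∀ q : (Fin 0 → ℝ) × (Fin 0 → ℝ), h q = 0 := by
      intro q
      have hq1 : q.1 = x := funext fun i => i.elim0
      rw [hh]
      simp [hq1]
    have : ∀ q ∈ {q : (Fin 0 → ℝ) × (Fin 0 → ℝ) | ‖x - q.1‖ + ‖x - q.2‖ ≤ η}, h q = 0 :=
      fun q _ => h0 q
    calc ∫⁻ q in {q : (Fin 0 → ℝ) × (Fin 0 → ℝ) | ‖x - q.1‖ + ‖x - q.2‖ ≤ η}, h q
        ≤ ∫⁻ _ in {q : (Fin 0 → ℝ) × (Fin 0 → ℝ) | ‖x - q.1‖ + ‖x - q.2‖ ≤ η}, 0 :=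
          lintegral_mono fun q => by rw [h0 q]
      _ = 0 := by simp
      _ ≤ _ := zero_le
  -- now `0 < n`
  have hC₀ : 0 ≤ C₀ := by
    have hne : Nonempty (Fin n) := Fin.pos_iff_nonempty.mp hn
    set y : Fin n → ℝ := fun i => x i + 1 with hy
    have hxy : ‖x - y‖ = 1 := by
      have hxy' : x - y = fun _ => (-1 : ℝ) := by funext i; simp [hy]
      rw [hxy']
      simp [pi_norm_const]
    have h1 := hK x y x (Or.inl (by
      intro hxx; rw [hxx, sub_self, norm_zero] at hxy; norm_num at hxy))
    rw [hxy, sub_self, norm_zero, add_zero, one_pow, div_one] at h1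
    exact (abs_nonneg _).trans h1
  have hMb0 : 0 ≤ Mb := (norm_nonneg _).trans (hMb x)
  have hbL : ∀ y, |b x - b y| ≤ Mb * ‖x - y‖ := by
    intro y
    have := Convex.norm_image_sub_le_of_norm_fderiv_le (f := b)
      (fun w _ => (hb.differentiable one_ne_zero).differentiableAt)
      (fun w _ => hMb w) convex_univ (mem_univ y) (mem_univ x)
    simpa [Real.norm_eq_abs] using this
  set F : (Fin n → ℝ) → ENNReal := fun y => ENNReal.ofReal |f y| with hFdef
  set G : (Fin n → ℝ) → ENNReal := fun z => ENNReal.ofReal |g z| with hGdef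
  set sq : (Fin n → ℝ) × (Fin n → ℝ) → ℝ := fun q => ‖x - q.1‖ + ‖x - q.2‖ with hsq
  set A : ℕ → Set ((Fin n → ℝ) × (Fin n → ℝ)) :=
    fun j => {q | η / 2 ^ (j + 1) < sq q ∧ sq q ≤ η / 2 ^ j} with hA
  set Z : Set ((Fin n → ℝ) × (Fin n → ℝ)) := {q | q.1 = x} with hZ
  have hsq_cont : Continuous sq :=
    ((continuous_const.sub continuous_fst).norm.add (continuous_const.sub continuous_snd).norm)
  have hAm : ∀ j, MeasurableSet (A j) := fun j =>
    (measurableSet_Ioc (a := η / 2 ^ (j + 1)) (b := η / 2 ^ j)).preimage hsq_cont.measurable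
  have hZm : MeasurableSet Z := (measurableSet_singleton x).preimage measurable_fst
  -- covering
  have hcover : {q : (Fin n → ℝ) × (Fin n → ℝ) | ‖x - q.1‖ + ‖x - q.2‖ ≤ η} ⊆ Z ∪ ⋃ j, A j := by
    intro q hq
    have hq' : sq q ≤ η := hq
    by_cases h0 : sq q = 0
    · left
      have h1 : ‖x - q.1‖ = 0 := by
        have h2 := norm_nonneg (x - q.1)
        have h3 := norm_nonneg (x - q.2)
        have : ‖x - q.1‖ + ‖x - q.2‖ = 0 := h0
        linarith
      have : x - q.1 = 0 := norm_eq_zero.mp h1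
      exact (sub_eq_zero.mp this).symm
    · right
      have hs0 : 0 < sq q :=
        lt_of_le_of_ne (add_nonneg (norm_nonneg _) (norm_nonneg _)) (Ne.symm h0)
      have hex : ∃ j : ℕ, η / 2 ^ (j + 1) < sq q := by
        obtain ⟨m, hm⟩ := exists_pow_lt_of_lt_one (div_pos hs0 hη) (by norm_num : (1:ℝ)/2 < 1)
        refine ⟨m, ?_⟩
        have hle : η / 2 ^ (m + 1) ≤ η / 2 ^ m := by
          gcongr
          · exact one_le_two
          · exact Nat.le_succ m
        have h' : ((1:ℝ)/2) ^ m * η < sq q := by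
          rw [lt_div_iff₀ hη] at hm
          exact hm
        have hlt : η / 2 ^ m < sq q := by
          have heq : η / 2 ^ m = ((1:ℝ)/2) ^ m * η := by
            rw [div_pow, one_pow, one_div, inv_mul_eq_div]
          rw [heq]
          exact h'
        exact lt_of_le_of_lt hle hlt
      refine mem_iUnion.mpr ⟨Nat.find hex, Nat.find_spec hex, ?_⟩
      rcases Nat.eq_zero_or_pos (Nat.find hex) with hf0 | hfp
      · rw [hf0]; simpa using hq'
      · have hmin := Nat.find_min hex (Nat.sub_lt hfp one_pos)
        have heq : Nat.find hex - 1 + 1 = Nat.find hex := by omega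
        rw [heq] at hmin
        exact not_lt.mp hmin
  -- splitting the integral
  have hsplit : ∫⁻ q in {q : (Fin n → ℝ) × (Fin n → ℝ) | ‖x - q.1‖ + ‖x - q.2‖ ≤ η}, h q
      ≤ (∫⁻ q in Z, h q) + ∑' j, ∫⁻ q in A j, h q := by
    have hle : volume.restrict {q : (Fin n → ℝ) × (Fin n → ℝ) | ‖x - q.1‖ + ‖x - q.2‖ ≤ η}
        ≤ volume.restrict Z + Measure.sum fun j => volume.restrict (A j) := by
      refine le_trans (Measure.restrict_mono hcover le_rfl) ?_
      refine le_trans (Measure.restrict_union_le _ _) ?_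
      exact add_le_add_right Measure.restrict_iUnion_le _
    refine le_trans (lintegral_mono' hle le_rfl) ?_
    rw [lintegral_add_measure, lintegral_sum_measure]
  -- integral over Z vanishes
  have hZ0 : ∫⁻ q in Z, h q = 0 := by
    rw [← lintegral_indicator hZm]
    have hZi : ∀ q, Z.indicator h q = 0 := by
      intro q
      by_cases hqZ : q ∈ Z
      · rw [indicator_of_mem hqZ, hh]
        have hq1 : q.1 = x := hqZ
        simp [hq1]
      · rw [indicator_of_notMem hqZ]
    simp only [hZi, lintegral_zero]
  -- the maximal function
  set M : ENNReal := bilinearMaximal f g x with hM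
  -- per-annulus estimate
  have hann : ∀ j : ℕ, ∫⁻ q in A j, h q
      ≤ ENNReal.ofReal (Mb * C₀ * η * 4 ^ (2 * n) * (1/2) ^ j) * M := by
    intro j
    set ρ : ℝ := η / 2 ^ j with hρdef
    set r : ℝ := η / 2 ^ (j + 1) with hrdef
    have hρ : 0 < ρ := by positivity
    have hr : 0 < r := by positivity
    set B := Metric.closedBall x ρ with hB
    have hBm : MeasurableSet (B ×ˢ B) :=
      measurableSet_closedBall.prod measurableSet_closedBall
    set c : ENNReal := ENNReal.ofReal (Mb * ρ * (C₀ / r ^ (2 * n))) with hc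
    have hpt : ∀ q, (A j).indicator h q
        ≤ (B ×ˢ B).indicator (fun q => c * (F q.1 * G q.2)) q := by
      intro q
      by_cases hqA : q ∈ A j
      · have hql := hqA.1
        have hqu := hqA.2
        have hq1 : ‖x - q.1‖ ≤ ρ := le_trans (le_add_of_nonneg_right (norm_nonneg _)) hqu
        have hq2 : ‖x - q.2‖ ≤ ρ := le_trans (le_add_of_nonneg_left (norm_nonneg _)) hqu
        have hmem : q ∈ B ×ˢ B := by
          constructor
          · rw [hB, mem_closedBall, dist_eq_norm, ← norm_neg]
            simpa [neg_sub] using hq1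
          · rw [hB, mem_closedBall, dist_eq_norm, ← norm_neg]
            simpa [neg_sub] using hq2
        rw [indicator_of_mem hqA, indicator_of_mem hmem]
        have hKb : |K x q.1 q.2| ≤ C₀ / r ^ (2 * n) := by
          have hne : x ≠ q.1 ∨ x ≠ q.2 := by
            by_contra hcon
            push_neg at hcon
            obtain ⟨h1, h2⟩ := hcon
            rw [hsq] at hql
            simp only [← h1, ← h2, sub_self, norm_zero, add_zero] at hql
            linarith
          refine le_trans (hK x q.1 q.2 hne) ?_
          have hrs : r ^ (2 * n) ≤ (‖x - q.1‖ + ‖x - q.2‖) ^ (2 * n) :=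
            pow_le_pow_left₀ hr.le hql.le _
          gcongr
        have hbq : |b x - b q.1| ≤ Mb * ρ :=
          le_trans (hbL q.1) (mul_le_mul_of_nonneg_left hq1 hMb0)
        have hstep : |b x - b q.1| * |K x q.1 q.2| * (|f q.1| * |g q.2|)
            ≤ Mb * ρ * (C₀ / r ^ (2 * n)) * (|f q.1| * |g q.2|) := by
          exact mul_le_mul_of_nonneg_right
            (mul_le_mul hbq hKb (abs_nonneg _) (by positivity)) (by positivity)
        calc h q = ENNReal.ofReal (|b x - b q.1| * |K x q.1 q.2| * (|f q.1| * |g q.2|)) := by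
              rw [hh]
          _ ≤ ENNReal.ofReal (Mb * ρ * (C₀ / r ^ (2 * n)) * (|f q.1| * |g q.2|)) :=
              ENNReal.ofReal_le_ofReal hstep
          _ = c * (F q.1 * G q.2) := by
              rw [hc, hFdef, hGdef, ENNReal.ofReal_mul (by positivity),
                ENNReal.ofReal_mul (abs_nonneg _)]
      · rw [indicator_of_notMem hqA]; exact zero_le
    have hrw : (volume : Measure ((Fin n → ℝ) × (Fin n → ℝ))).restrict (B ×ˢ B)
        = (volume.restrict B).prod (volume.restrict B) := by
      rw [Measure.volume_eq_prod, Measure.prod_restrict]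
    have hvol : volume B = ENNReal.ofReal ((2 * ρ) ^ n) := by
      rw [hB]
      simpa using Real.volume_pi_closedBall x hρ.le
    have hvol0 : volume B ≠ 0 := by
      rw [hvol]
      exact (ENNReal.ofReal_pos.mpr (by positivity)).ne'
    have hvolT : volume B ≠ ⊤ := by rw [hvol]; exact ENNReal.ofReal_ne_top
    have hFB : ∫⁻ y in B, F y
        = laverage (volume.restrict B) F * volume B := by
      rw [laverage_eq, Measure.restrict_apply_univ]
      exact (ENNReal.div_mul_cancel hvol0 hvolT).symm
    have hGB : ∫⁻ z in B, G z
        = laverage (volume.restrict B) G * volume B := by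
      rw [laverage_eq, Measure.restrict_apply_univ]
      exact (ENNReal.div_mul_cancel hvol0 hvolT).symm
    have hMle : laverage (volume.restrict B) F * laverage (volume.restrict B) G ≤ M := by
      rw [hM, bilinearMaximal, hFdef, hGdef]
      exact le_iSup_of_le x (le_iSup_of_le ρ (le_iSup_of_le hρ
        (le_iSup_of_le (mem_closedBall_self hρ.le) le_rfl)))
    calc ∫⁻ q in A j, h q = ∫⁻ q, (A j).indicator h q := (lintegral_indicator (hAm j) _).symm
      _ ≤ ∫⁻ q, (B ×ˢ B).indicator (fun q => c * (F q.1 * G q.2)) q := lintegral_mono hpt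
      _ = ∫⁻ q in B ×ˢ B, c * (F q.1 * G q.2) := lintegral_indicator hBm _
      _ = c * ∫⁻ q in B ×ˢ B, F q.1 * G q.2 := lintegral_const_mul' _ _ ENNReal.ofReal_ne_top
      _ ≤ c * ((∫⁻ y in B, F y) * ∫⁻ z in B, G z) := by
          apply mul_le_mul_right
          rw [hrw]
          exact my_prod_le' _ _ F G (fun y => ENNReal.ofReal_ne_top)
            (fun z => ENNReal.ofReal_ne_top)
      _ = (c * (volume B * volume B)) *
            (laverage (volume.restrict B) F * laverage (volume.restrict B) G) := by
          rw [hFB, hGB]; ring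
      _ ≤ (c * (volume B * volume B)) * M := mul_le_mul_right hMle _
      _ = ENNReal.ofReal (Mb * C₀ * η * 4 ^ (2 * n) * (1/2) ^ j) * M := by
          rw [hvol, hc, ← ENNReal.ofReal_mul (by positivity),
            ← ENNReal.ofReal_mul (by positivity)]
          congr 1
          rw [hρdef, hrdef]
          have h4 : (4:ℝ) ^ (2 * n) = 2 ^ (n * 4) := by
            rw [show (4:ℝ) = 2 ^ 2 by norm_num, ← pow_mul]; ring_nf
          rw [h4]
          have h2 : (2:ℝ) ^ j ≠ 0 := by positivity
          have h2' : (2:ℝ) ^ (j + 1) ≠ 0 := by positivity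
          have hη0 : η ≠ 0 := hη.ne'
          congr 1
          rw [one_div_pow]
          field_simp
          have e1 : η / 2 ^ (j + 1) = (η * 2 / 2 ^ j) / 4 := by rw [pow_succ]; field_simp; norm_num
          have e2 : (2:ℝ) ^ (n * 4) = 4 ^ (2 * n) := by
            rw [show (4:ℝ) = 2 ^ 2 by norm_num, ← pow_mul]; ring_nf
          rw [e1, e2, mul_assoc _ _ ((4:ℝ) ^ (2 * n)), ← mul_pow,
            div_mul_cancel₀ _ (by norm_num : (4:ℝ) ≠ 0)]
          ring
  -- summing up
  calc ∫⁻ q in {q : (Fin n → ℝ) × (Fin n → ℝ) | ‖x - q.1‖ + ‖x - q.2‖ ≤ η}, h q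
      ≤ (∫⁻ q in Z, h q) + ∑' j, ∫⁻ q in A j, h q := hsplit
    _ = ∑' j, ∫⁻ q in A j, h q := by rw [hZ0, zero_add]
    _ ≤ ∑' j, ENNReal.ofReal (Mb * C₀ * η * 4 ^ (2 * n) * (1/2) ^ j) * M :=
        ENNReal.tsum_le_tsum hann
    _ = (∑' j, ENNReal.ofReal (Mb * C₀ * η * 4 ^ (2 * n) * (1/2) ^ j)) * M :=
        ENNReal.tsum_mul_right
    _ ≤ ENNReal.ofReal (2 * 4 ^ (2 * n) * C₀ * η * Mb) * M := by
        apply mul_le_mul_left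
        have hterm : ∀ j : ℕ, ENNReal.ofReal (Mb * C₀ * η * 4 ^ (2 * n) * (1/2) ^ j)
            = ENNReal.ofReal (Mb * C₀ * η * 4 ^ (2 * n)) * (ENNReal.ofReal (1/2)) ^ j := by
          intro j
          rw [ENNReal.ofReal_mul (by positivity), ENNReal.ofReal_pow (by norm_num)]
        simp only [hterm]
        rw [ENNReal.tsum_mul_left, ENNReal.tsum_geometric]
        have hhalf : ENNReal.ofReal (1/2 : ℝ) = 2⁻¹ := by
          rw [one_div, ENNReal.ofReal_inv_of_pos two_pos]
          norm_num
        rw [hhalf, ENNReal.one_sub_inv_two, inv_inv]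
        rw [show (2 : ENNReal) = ENNReal.ofReal (2:ℝ) by norm_num,
          ← ENNReal.ofReal_mul (by positivity)]
        exact le_of_eq (by ring)
end
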